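/- In Pientka's modified subtyping system (with the SA-Hyp rule Γ ⊢ X <: T whenever X<:T ∈ Γ, and the SA-Tr-TVar rule deriving Γ ⊢ X <: T from Γ ⊢ X <: U and Γ ⊢ U <: T, in place of SA-Trans-TVar), narrowing can be proved independently of transitivity: if Γ₁, X<:Q, Γ₂ ⊢ M <: N and Γ₁ ⊢ P <: Q are derivable, then Γ₁, X<:P, Γ₂ ⊢ M <: N is derivable, without using transitivity of the full relation. -/

import Mathlib

inductive Ty where
  | var : ℕ → Ty
  | top : Ty
  | arrow : Ty → Ty → Ty
  | all : ℕ → Ty → Ty → Ty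

abbrev Env := List (ℕ × Ty)

def freeVars : Ty → Finset ℕ
  | .var x => {x}
  | .top => ∅
  | .arrow a b => freeVars a ∪ freeVars b
  | .all x a b => freeVars a ∪ (freeVars b \ {x})

def boundVars (Γ : Env) : Finset ℕ := (Γ.map Prod.fst).toFinset

/-- A type is well-scoped in Γ if all its free variables are bound in Γ. -/
def WellScoped (Γ : Env) (t : Ty) : Prop := freeVars t ⊆ boundVars Γ

/-- The original algorithmic subtyping system for F<:. -/
inductive Subty : Env → Ty → Ty → Prop where
  | top {Γ S} : WellScoped Γ S → Subty Γ S .top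
  | refl {Γ X} : X ∈ boundVars Γ → Subty Γ (.var X) (.var X)
  | trans_tvar {Γ X U T} : (X, U) ∈ Γ → Subty Γ U T → Subty Γ (.var X) T
  | arrow {Γ S₁ S₂ T₁ T₂} : Subty Γ T₁ S₁ → Subty Γ S₂ T₂ →
      Subty Γ (.arrow S₁ S₂) (.arrow T₁ T₂)
  | all {Γ X S₁ S₂ T₁ T₂} : Subty Γ T₁ S₁ → Subty ((X, T₁) :: Γ) S₂ T₂ →
      Subty Γ (.all X S₁ S₂) (.all X T₁ T₂)

/-- Pientka's modified subtyping system, with SA-Hyp and SA-Tr-TVar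
    in place of SA-Trans-TVar. -/
inductive Subty' : Env → Ty → Ty → Prop where
  | top {Γ S} : WellScoped Γ S → Subty' Γ S .top
  | refl {Γ X} : X ∈ boundVars Γ → Subty' Γ (.var X) (.var X)
  | hyp {Γ X T} : (X, T) ∈ Γ → Subty' Γ (.var X) T
  | tr_tvar {Γ X U T} : Subty' Γ (.var X) U → Subty' Γ U T → Subty' Γ (.var X) T
  | arrow {Γ S₁ S₂ T₁ T₂} : Subty' Γ T₁ S₁ → Subty' Γ S₂ T₂ →
      Subty' Γ (.arrow S₁ S₂) (.arrow T₁ T₂)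
  | all {Γ X S₁ S₂ T₁ T₂} : Subty' Γ T₁ S₁ → Subty' ((X, T₁) :: Γ) S₂ T₂ →
      Subty' Γ (.all X S₁ S₂) (.all X T₁ T₂)

lemma boundVars_mono {Γ Γ' : Env} (h : ∀ p ∈ Γ, p ∈ Γ') :
    boundVars Γ ⊆ boundVars Γ' := by
  intro x hx
  simp only [boundVars, List.mem_toFinset, List.mem_map] at hx ⊢
  obtain ⟨p, hp, rfl⟩ := hx
  exact ⟨p, h p hp, rfl⟩

lemma sub'_weaken {Γ M N} (h : Subty' Γ M N) :
    ∀ Γ', (∀ p ∈ Γ, p ∈ Γ') → Subty' Γ' M N := by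
  induction h with
  | top hs => intro Γ' hsub; exact .top (hs.trans (boundVars_mono hsub))
  | refl hx => intro Γ' hsub; exact .refl (boundVars_mono hsub hx)
  | hyp hm => intro Γ' hsub; exact .hyp (hsub _ hm)
  | tr_tvar _ _ ih1 ih2 => intro Γ' hsub; exact .tr_tvar (ih1 Γ' hsub) (ih2 Γ' hsub)
  | arrow _ _ ih1 ih2 => intro Γ' hsub; exact .arrow (ih1 Γ' hsub) (ih2 Γ' hsub)
  | @all _ Y _ _ T₁ _ _ _ ih1 ih2 =>
      intro Γ' hsub
      refine .all (ih1 Γ' hsub) (ih2 ((Y, T₁) :: Γ') ?_)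
      intro p hp
      rcases List.mem_cons.mp hp with h | h
      · exact h ▸ List.mem_cons_self
      · exact List.mem_cons_of_mem _ (hsub p h)

lemma boundVars_append (Γ₁ Γ₂ : Env) :
    boundVars (Γ₁ ++ Γ₂) = boundVars Γ₁ ∪ boundVars Γ₂ := by
  simp [boundVars]

lemma boundVars_mid (Γ₁ Γ₂ : Env) (X : ℕ) (P Q : Ty) :
    boundVars (Γ₂ ++ (X, P) :: Γ₁) = boundVars (Γ₂ ++ (X, Q) :: Γ₁) := by
  simp [boundVars]

theorem sub'_narrowing (Γ₁ Γ₂ : Env) (X : ℕ) (P Q M N : Ty)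
    (h1 : Subty' (Γ₂ ++ (X, Q) :: Γ₁) M N) (h2 : Subty' Γ₁ P Q) :
    Subty' (Γ₂ ++ (X, P) :: Γ₁) M N := by
  generalize hΓ : Γ₂ ++ (X, Q) :: Γ₁ = Γ at h1
  induction h1 generalizing Γ₂ with
  | top hs => subst hΓ; exact .top (by rwa [WellScoped, boundVars_mid Γ₁ Γ₂ X P Q])
  | refl hx => subst hΓ; exact .refl (by rwa [boundVars_mid Γ₁ Γ₂ X P Q])
  | @hyp _ Y T hm =>
      subst hΓ
      rcases List.mem_append.mp hm with h | h
      · exact .hyp (List.mem_append.mpr (Or.inl h))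
      · rcases List.mem_cons.mp h with h | h
        · obtain ⟨rfl, rfl⟩ := Prod.mk.injEq .. ▸ h
          refine .tr_tvar (.hyp (List.mem_append.mpr (Or.inr List.mem_cons_self))) ?_
          exact sub'_weaken h2 _ (fun p hp =>
            List.mem_append.mpr (Or.inr (List.mem_cons_of_mem _ hp)))
        · exact .hyp (List.mem_append.mpr (Or.inr (List.mem_cons_of_mem _ h)))
  | tr_tvar _ _ ih1 ih2 => exact .tr_tvar (ih1 Γ₂ hΓ) (ih2 Γ₂ hΓ)
  | arrow _ _ ih1 ih2 => exact .arrow (ih1 Γ₂ hΓ) (ih2 Γ₂ hΓ)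
  | @all _ Y _ _ T₁ _ _ _ ih1 ih2 =>
      subst hΓ
      exact .all (ih1 Γ₂ rfl) (ih2 ((Y, T₁) :: Γ₂) rfl)
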